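/- Let d > 1 be an integer which is not a perfect square. There exists a constant c > 0 depending only on d such that the following holds: for all integers a', b', all natural numbers W', and all real X ≥ 1, if gcd(b', W') = 1 and (a')² ≡ (b')²·d (mod W'), then the number of pairs (A, B) ∈ ℤ² with |A| ≤ X, |B| ≤ X and b'·B ≡ a'·A (mod W') is at most c·(X²/W' + 1)·(log 2W')². -/

import Mathlib

set_option maxHeartbeats 1000000 in
theorem stmt16 (d : ℤ) (hd : 1 < d) (hns : ¬IsSquare d) :
    ∃ c : ℝ, 0 < c ∧
      ∀ (a' b' : ℤ) (W' : ℕ) (X : ℝ), 0 < W' → 1 ≤ X →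
        Int.gcd b' (W' : ℤ) = 1 → (W' : ℤ) ∣ a' ^ 2 - b' ^ 2 * d →
        (Nat.card {AB : ℤ × ℤ // |(AB.1 : ℝ)| ≤ X ∧ |(AB.2 : ℝ)| ≤ X ∧
            (W' : ℤ) ∣ b' * AB.2 - a' * AB.1} : ℝ) ≤
          c * (X ^ 2 / (W' : ℝ) + 1) * Real.log (2 * W') ^ 2 := by
  classical
  set D : ℕ := (1 + d).toNat with hDdef
  have hDz : (D : ℤ) = 1 + d := Int.toNat_of_nonneg (by linarith)
  have hDpos : 0 < D := by
    have : (0 : ℤ) < (D : ℤ) := by rw [hDz]; linarith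
    exact_mod_cast this
  have hlog2 : 0 < Real.log 2 := Real.log_pos (by norm_num)
  refine ⟨8 * D / Real.log 2 ^ 2, by positivity, ?_⟩
  intro a' b' W' X hW hX hgcd hdvd
  -- the separation scale
  set m : ℕ := Nat.sqrt ((W' - 1) / D) with hmdef
  set n : ℕ := m + 1 with hndef
  have hnpos : (0 : ℤ) < (n : ℤ) := by exact_mod_cast Nat.succ_pos m
  have hDm : D * m ^ 2 ≤ W' - 1 := by
    have h1 : m * m ≤ (W' - 1) / D := Nat.sqrt_le _
    calc D * m ^ 2 = D * (m * m) := by ring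
    _ ≤ D * ((W' - 1) / D) := Nat.mul_le_mul_left _ h1
    _ ≤ W' - 1 := Nat.mul_div_le _ _
  have hDn : (W' : ℤ) ≤ (D : ℤ) * (n : ℤ) ^ 2 := by
    have h1 : (W' - 1) / D < n * n := Nat.lt_succ_sqrt _
    have h2 : (W' - 1) / D + 1 ≤ n * n := h1
    have h3 : W' - 1 < D * ((W' - 1) / D + 1) := by
      have hq := Nat.div_add_mod (W' - 1) D
      have hr := Nat.mod_lt (W' - 1) hDpos
      have hj : D * ((W' - 1) / D + 1) = D * ((W' - 1) / D) + D := by ring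
      omega
    have h4 : W' ≤ D * (n * n) := by
      have := Nat.mul_le_mul_left D h2
      omega
    have : (W' : ℤ) ≤ ((D * (n * n) : ℕ) : ℤ) := by exact_mod_cast h4
    calc (W' : ℤ) ≤ ((D * (n * n) : ℕ) : ℤ) := this
    _ = (D : ℤ) * (n : ℤ) ^ 2 := by push_cast; ring
  -- coprimality
  have hcop : IsCoprime (b' ^ 2) (W' : ℤ) := by
    have := Int.isCoprime_iff_gcd_eq_one.mpr hgcd
    exact this.pow_left
  -- key separation lemma
  have key : ∀ u v : ℤ, (W' : ℤ) ∣ b' * v - a' * u → |u| ≤ (m : ℤ) → |v| ≤ (m : ℤ) →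
      u = 0 ∧ v = 0 := by
    intro u v hdvd' hu hv
    have h1 : (W' : ℤ) ∣ b' ^ 2 * (v ^ 2 - u ^ 2 * d) := by
      have e : b' ^ 2 * (v ^ 2 - u ^ 2 * d) =
          (b' * v - a' * u) * (b' * v + a' * u) + u ^ 2 * (a' ^ 2 - b' ^ 2 * d) := by ring
      rw [e]
      exact dvd_add (hdvd'.mul_right _) (hdvd.mul_left _)
    have h2 : (W' : ℤ) ∣ v ^ 2 - u ^ 2 * d := (hcop.symm.dvd_of_dvd_mul_left h1)
    by_contra hcon
    have hne : v ^ 2 - u ^ 2 * d ≠ 0 := by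
      intro h0
      rcases eq_or_ne u 0 with hu0 | hu0
      · subst hu0
        have : v = 0 := by
          have : v ^ 2 = 0 := by linarith [h0]
          exact pow_eq_zero_iff (n := 2) (by norm_num) |>.mp this
        exact hcon ⟨rfl, this⟩
      · have hvv : v ^ 2 = u ^ 2 * d := by linarith
        have hdvdp : u ^ 2 ∣ v ^ 2 := ⟨d, hvv⟩
        have huv : u ∣ v := (Int.pow_dvd_pow_iff (by norm_num)).mp hdvdp
        obtain ⟨w, hw⟩ := huv
        apply hns
        refine ⟨w, ?_⟩
        have hu2 : u ^ 2 ≠ 0 := pow_ne_zero _ hu0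
        have : u ^ 2 * (w * w) = u ^ 2 * d := by rw [← hvv, hw]; ring
        have := mul_left_cancel₀ hu2 this
        rw [← this]
    have hle : (W' : ℤ) ≤ |v ^ 2 - u ^ 2 * d| :=
      Int.le_of_dvd (abs_pos.mpr hne) ((dvd_abs _ _).mpr h2)
    have hub : |v ^ 2 - u ^ 2 * d| ≤ (m : ℤ) ^ 2 * (1 + d) := by
      have hv2 : v ^ 2 ≤ (m : ℤ) ^ 2 := by
        calc v ^ 2 = |v| ^ 2 := (sq_abs v).symm
        _ ≤ (m : ℤ) ^ 2 := pow_le_pow_left₀ (abs_nonneg v) hv 2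
      have hu2 : u ^ 2 ≤ (m : ℤ) ^ 2 := by
        calc u ^ 2 = |u| ^ 2 := (sq_abs u).symm
        _ ≤ (m : ℤ) ^ 2 := pow_le_pow_left₀ (abs_nonneg u) hu 2
      have hd0 : (0 : ℤ) ≤ d := by linarith
      have h3 : |v ^ 2 - u ^ 2 * d| ≤ v ^ 2 + u ^ 2 * d := by
        rw [abs_sub_le_iff]
        constructor
        · nlinarith [sq_nonneg u, sq_nonneg v]
        · nlinarith [sq_nonneg u, sq_nonneg v]
      nlinarith [sq_nonneg u, sq_nonneg v]
    have hDmz : (D : ℤ) * (m : ℤ) ^ 2 ≤ (W' : ℤ) - 1 := by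
      have : ((D * m ^ 2 : ℕ) : ℤ) ≤ ((W' - 1 : ℕ) : ℤ) := by exact_mod_cast hDm
      push_cast [Nat.cast_sub (by omega : 1 ≤ W')] at this
      convert this using 2 <;> push_cast <;> ring
    have : (m : ℤ) ^ 2 * (1 + d) = (D : ℤ) * (m : ℤ) ^ 2 := by rw [hDz]; ring
    omega
  -- set up the injection
  set Xz : ℤ := ⌊X⌋ with hXzdef
  have hXz1 : 1 ≤ Xz := by exact_mod_cast Int.le_floor.mpr (by exact_mod_cast hX)
  set k : ℤ := Xz / (n : ℤ) with hkdef
  have hk0 : 0 ≤ k := Int.ediv_nonneg (by omega) (by omega)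
  set T : Finset (ℤ × ℤ) :=
    Finset.Icc (-(k + 1)) k ×ˢ Finset.Icc (-(k + 1)) k with hTdef
  have hmem : ∀ (A : ℤ), |(A : ℝ)| ≤ X → A / (n : ℤ) ∈ Finset.Icc (-(k + 1)) k := by
    intro A hA
    have hAX : |A| ≤ Xz := by
      rw [hXzdef]
      refine Int.le_floor.mpr ?_
      exact_mod_cast hA
    rw [abs_le] at hAX
    rw [Finset.mem_Icc]
    constructor
    · have h1 : -(k + 1) ≤ (-Xz) / (n : ℤ) := by
        rw [Int.le_ediv_iff_mul_le hnpos]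
        have := Int.lt_ediv_add_one_mul_self Xz hnpos
        rw [← hkdef] at this
        linarith
      exact le_trans h1 (Int.ediv_le_ediv hnpos hAX.1)
    · exact le_trans (Int.ediv_le_ediv hnpos hAX.2) le_rfl
  -- the injection into T
  set S := {AB : ℤ × ℤ // |(AB.1 : ℝ)| ≤ X ∧ |(AB.2 : ℝ)| ≤ X ∧
      (W' : ℤ) ∣ b' * AB.2 - a' * AB.1} with hSdef
  have hinj : ∃ f : S → {x // x ∈ T}, Function.Injective f := by
    refine ⟨fun p => ⟨(p.1.1 / (n : ℤ), p.1.2 / (n : ℤ)), ?_⟩, ?_⟩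
    · rw [hTdef, Finset.mem_product]
      exact ⟨hmem _ p.2.1, hmem _ p.2.2.1⟩
    · rintro ⟨⟨A, B⟩, hA, hB, hABd⟩ ⟨⟨A', B'⟩, hA', hB', hABd'⟩ hfeq
      simp only [Subtype.mk_eq_mk, Prod.mk.injEq] at hfeq
      obtain ⟨hq1, hq2⟩ := hfeq
      have hclose : ∀ x y : ℤ, x / (n : ℤ) = y / (n : ℤ) → |x - y| ≤ (m : ℤ) := by
        intro x y hxy
        have ex := Int.mul_ediv_add_emod x (n : ℤ)
        have ey := Int.mul_ediv_add_emod y (n : ℤ)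
        have hx1 : 0 ≤ x % (n : ℤ) := Int.emod_nonneg x (by omega)
        have hx2 : x % (n : ℤ) < (n : ℤ) := Int.emod_lt_of_pos x hnpos
        have hy1 : 0 ≤ y % (n : ℤ) := Int.emod_nonneg y (by omega)
        have hy2 : y % (n : ℤ) < (n : ℤ) := Int.emod_lt_of_pos y hnpos
        have h5 : x - y = x % (n : ℤ) - y % (n : ℤ) := by
          calc x - y = ((n : ℤ) * (x / (n : ℤ)) + x % (n : ℤ))
              - ((n : ℤ) * (y / (n : ℤ)) + y % (n : ℤ)) := by rw [ex, ey]
          _ = (n : ℤ) * (x / (n : ℤ) - y / (n : ℤ)) + (x % (n : ℤ) - y % (n : ℤ)) := by ring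
          _ = x % (n : ℤ) - y % (n : ℤ)  := by rw [hxy]; ring
        have hnm : (n : ℤ) = (m : ℤ) + 1 := by exact_mod_cast hndef
        rw [abs_le]
        constructor <;> linarith
      have hdd : (W' : ℤ) ∣ b' * (B - B') - a' * (A - A') := by
        have := dvd_sub hABd hABd'
        rw [show b' * (B - B') - a' * (A - A') = b' * B - a' * A - (b' * B' - a' * A') by ring]; exact this
      obtain ⟨e1, e2⟩ := key (A - A') (B - B') hdd (hclose _ _ hq1) (hclose _ _ hq2)
      have eA : A = A' := by omega
      have eB : B = B' := by omega
      subst eA; subst eB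
      rfl
  -- cardinality bound
  obtain ⟨f, hf⟩ := hinj
  have hcard : Nat.card S ≤ T.card := by
    calc Nat.card S ≤ Nat.card {x // x ∈ T} := Nat.card_le_card_of_injective f hf
    _ = T.card := Nat.card_eq_finsetCard T
  have hTcard : (T.card : ℝ) = (2 * (k : ℝ) + 2) ^ 2 := by
    have hc : T.card = (2 * k + 2).toNat * (2 * k + 2).toNat := by
      rw [hTdef, Finset.card_product, Int.card_Icc]
      congr 2 <;> ring
    have h2 : (((2 * k + 2).toNat : ℕ) : ℝ) = 2 * (k : ℝ) + 2 := by
      have h3 : ((2 * k + 2).toNat : ℤ) = 2 * k + 2 := Int.toNat_of_nonneg (by omega)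
      have h4 := congrArg (fun z : ℤ => (z : ℝ)) h3
      simp only [Int.cast_natCast] at h4
      rw [h4]; push_cast; ring
    rw [hc, Nat.cast_mul, h2]; ring
  -- real estimates
  have hWpos : (0 : ℝ) < (W' : ℝ) := by exact_mod_cast hW
  have hnR : (0 : ℝ) < (n : ℝ) := by exact_mod_cast hnpos
  have hkX : (k : ℝ) * (n : ℝ) ≤ X := by
    have h1 : k * (n : ℤ) ≤ Xz := Int.ediv_mul_le Xz (by omega)
    have h3 : (Xz : ℝ) ≤ X := Int.floor_le X
    calc (k : ℝ) * (n : ℝ) = ((k * (n : ℤ) : ℤ) : ℝ) := by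
          rw [Int.cast_mul, Int.cast_natCast]
    _ ≤ (Xz : ℝ) := by exact_mod_cast h1
    _ ≤ X := h3
  have hkR : (k : ℝ) ≤ X / (n : ℝ) := by
    rw [le_div_iff₀ hnR]; exact hkX
  have hmain : (Nat.card S : ℝ) ≤ 8 * D * (X ^ 2 / (W' : ℝ) + 1) := by
    have h1 : (Nat.card S : ℝ) ≤ (T.card : ℝ) := by exact_mod_cast hcard
    have h2 : (2 * (k : ℝ) + 2) ^ 2 ≤ (2 * (X / n) + 2) ^ 2 := by
      have hb : (0 : ℝ) ≤ 2 * (k : ℝ) + 2 := by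
        have : (0 : ℝ) ≤ (k : ℝ) := by exact_mod_cast hk0
        linarith
      apply pow_le_pow_left₀ hb
      linarith
    have h3 : (2 * (X / n) + 2) ^ 2 ≤ 8 * (X / n) ^ 2 + 8 := by nlinarith [sq_nonneg (X / n - 1)]
    have h4 : (X / n) ^ 2 ≤ D * (X ^ 2 / (W' : ℝ)) := by
      have hDnR : (W' : ℝ) ≤ (D : ℝ) * (n : ℝ) ^ 2 := by exact_mod_cast hDn
      have hn2 : (0 : ℝ) < (n : ℝ) ^ 2 := by positivity
      rw [div_pow, ← mul_div_assoc, div_le_div_iff₀ hn2 hWpos]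
      calc X ^ 2 * (W' : ℝ) ≤ X ^ 2 * ((D : ℝ) * (n : ℝ) ^ 2) :=
            mul_le_mul_of_nonneg_left hDnR (sq_nonneg X)
      _ = (D : ℝ) * X ^ 2 * (n : ℝ) ^ 2 := by ring
    calc (Nat.card S : ℝ) ≤ (T.card : ℝ) := h1
    _ = (2 * (k : ℝ) + 2) ^ 2 := hTcard
    _ ≤ (2 * (X / n) + 2) ^ 2 := h2
    _ ≤ 8 * (X / n) ^ 2 + 8 := h3
    _ ≤ 8 * ((D : ℝ) * (X ^ 2 / (W' : ℝ))) + 8 := by linarith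
    _ ≤ 8 * D * (X ^ 2 / (W' : ℝ) + 1) := by
        have hD1 : (1 : ℝ) ≤ (D : ℝ) := by exact_mod_cast hDpos
        nlinarith [div_nonneg (sq_nonneg X) hWpos.le]
  -- absorb into the log factor
  have hlogW : Real.log 2 ≤ Real.log (2 * W') := by
    apply Real.log_le_log (by norm_num)
    have : (1 : ℝ) ≤ (W' : ℝ) := by exact_mod_cast hW
    linarith
  have hlogsq : Real.log 2 ^ 2 ≤ Real.log (2 * W') ^ 2 :=
    pow_le_pow_left₀ hlog2.le hlogW 2
  have hfac : (0 : ℝ) ≤ X ^ 2 / (W' : ℝ) + 1 := by positivity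
  calc (Nat.card S : ℝ) ≤ 8 * D * (X ^ 2 / (W' : ℝ) + 1) := hmain
  _ = 8 * D / Real.log 2 ^ 2 * (X ^ 2 / (W' : ℝ) + 1) * Real.log 2 ^ 2 := by
      field_simp
  _ ≤ 8 * D / Real.log 2 ^ 2 * (X ^ 2 / (W' : ℝ) + 1) * Real.log (2 * W') ^ 2 := by
      apply mul_le_mul_of_nonneg_left hlogsq
      positivity
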